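/- Let $r,q\ge 1$, $n=qr+1$, and let $1\le m_1,\dots,m_{r-1}\le q$. The permutation $v_{\underline{m}}=\prod_{i=1}^{r-1}(s_{(i-1)q+m_i}s_{(i-1)q+m_i-1}\cdots s_{i+2}s_{i+1})$ of $S_n$ satisfies $v_{\underline{m}}(1)=1$ and $v_{\underline{m}}(j)=(j-2)q+m_{j-1}+1$ for all $2\le j\le r$. -/

import Mathlib

/-- The descending word `s_hi s_{hi-1} ⋯ s_lo` of simple transpositions
`s_i = (i, i+1)`, multiplied left to right. -/
def descWord (hi lo : ℕ) : Equiv.Perm ℕ :=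
  ((List.range (hi + 1 - lo)).map (fun t => Equiv.swap (hi - t) (hi - t + 1))).prod

/-- `v_{\underline m} = ∏_{i=1}^{r-1} (s_{(i-1)q+m_i} s_{(i-1)q+m_i-1} ⋯ s_{i+2} s_{i+1})`,
factors multiplied left to right. -/
def vmPerm (r q : ℕ) (m : ℕ → ℕ) : Equiv.Perm ℕ :=
  ((List.range (r - 1)).map (fun i' => descWord (i' * q + m (i' + 1)) (i' + 2))).prod

lemma descWord_empty (hi lo : ℕ) (h : hi + 1 ≤ lo) : descWord hi lo = 1 := by
  simp [descWord, Nat.sub_eq_zero_of_le h]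

lemma descWord_succ (h lo : ℕ) (hlo : lo ≤ h + 1) :
    descWord (h+1) lo = Equiv.swap (h+1) (h+2) * descWord h lo := by
  unfold descWord
  have e : h + 1 + 1 - lo = (h + 1 - lo) + 1 := by omega
  rw [e, List.range_succ_eq_map, List.map_cons, List.prod_cons, List.map_map]
  have hf : ((fun t => Equiv.swap (h + 1 - t) (h + 1 - t + 1)) ∘ Nat.succ)
      = fun t => Equiv.swap (h - t) (h - t + 1) := by
    funext t; simp [Function.comp, Nat.succ_sub_succ]
  rw [hf]
  norm_num

lemma descWord_fix_lt (hi lo x : ℕ) (hx : x < lo) : descWord hi lo x = x := by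
  induction hi with
  | zero =>
      rw [descWord_empty 0 lo (by omega)]; rfl
  | succ h ih =>
      rcases le_or_gt lo (h+1) with hle | hlt
      · rw [descWord_succ h lo hle, Equiv.Perm.mul_apply, ih,
          Equiv.swap_apply_of_ne_of_ne (by omega) (by omega)]
      · rw [descWord_empty _ _ (by omega)]; rfl

lemma descWord_fix_gt (hi lo x : ℕ) (hx : hi + 1 < x) : descWord hi lo x = x := by
  induction hi with
  | zero =>
      match lo with
      | 0 =>
          simp [descWord, Equiv.swap_apply_of_ne_of_ne (by omega : x ≠ 0) (by omega : x ≠ 1)]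
      | (l+1) => rw [descWord_empty 0 (l+1) (by omega)]; rfl
  | succ h ih =>
      rcases le_or_gt lo (h+1) with hle | hlt
      · rw [descWord_succ h lo hle, Equiv.Perm.mul_apply, ih (by omega),
          Equiv.swap_apply_of_ne_of_ne (by omega) (by omega)]
      · rw [descWord_empty _ _ (by omega)]; rfl

lemma descWord_apply_lo (hi lo : ℕ) (h : lo ≤ hi + 1) : descWord hi lo lo = hi + 1 := by
  induction hi with
  | zero =>
      match lo, h with
      | 0, _ => simp [descWord]
      | 1, _ => rw [descWord_empty 0 1 (by omega)]; rfl
  | succ hh ih =>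
      rcases le_or_gt lo (hh+1) with hle | hlt
      · rw [descWord_succ hh lo hle, Equiv.Perm.mul_apply, ih hle, Equiv.swap_apply_left]
      · have : lo = hh + 2 := by omega
        subst this
        rw [descWord_empty _ _ (by omega)]; rfl

lemma prod_fix (l : List (Equiv.Perm ℕ)) (x : ℕ) (h : ∀ p ∈ l, p x = x) : l.prod x = x := by
  induction l with
  | nil => rfl
  | cons a l ih =>
      rw [List.prod_cons, Equiv.Perm.mul_apply, ih (fun p hp => h p (List.mem_cons_of_mem a hp)),
        h a (List.mem_cons_self)]

lemma vm_aux (q : ℕ) (hq : 0 < q) (m : ℕ → ℕ) :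
    ∀ n : ℕ, (∀ i : ℕ, 1 ≤ i → i ≤ n → 1 ≤ m i ∧ m i ≤ q) →
    ∀ j : ℕ, 2 ≤ j → j ≤ n + 1 →
      (((List.range n).map (fun i' => descWord (i' * q + m (i' + 1)) (i' + 2))).prod : Equiv.Perm ℕ) j
        = (j - 2) * q + m (j - 1) + 1 := by
  intro n
  induction n with
  | zero => intro _ j hj2 hj; omega
  | succ n ih =>
      intro hm j hj2 hj
      rw [List.range_succ, List.map_append, List.prod_append, List.map_singleton,
        List.prod_singleton, Equiv.Perm.mul_apply]
      rcases le_or_gt j (n + 1) with hle | hlt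
      · rw [descWord_fix_lt _ _ _ (by omega)]
        exact ih (fun i h1 h2 => hm i h1 (by omega)) j hj2 hle
      · have hj' : j = n + 2 := by omega
        subst hj'
        obtain ⟨hm1, hm2⟩ := hm (n + 1) (by omega) (by omega)
        have hn : n ≤ n * q := Nat.le_mul_of_pos_right n hq
        rw [descWord_apply_lo _ _ (by omega)]
        rw [prod_fix]
        · congr 1
        · intro p hp
          simp only [List.mem_map, List.mem_range] at hp
          obtain ⟨i', hi', rfl⟩ := hp
          obtain ⟨h1, h2⟩ := hm (i' + 1) (by omega) (by omega)
          have : (i' + 1) * q ≤ n * q := Nat.mul_le_mul_right q (by omega)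
          apply descWord_fix_gt
          have : i' * q + q = (i' + 1) * q := by ring
          omega

theorem vmPerm_apply (r q : ℕ) (hr : 0 < r) (hq : 0 < q) (m : ℕ → ℕ)
    (hm : ∀ i : ℕ, 1 ≤ i → i ≤ r - 1 → 1 ≤ m i ∧ m i ≤ q) :
    vmPerm r q m 1 = 1 ∧
      ∀ j : ℕ, 2 ≤ j → j ≤ r → vmPerm r q m j = (j - 2) * q + m (j - 1) + 1 := by
  constructor
  · apply prod_fix
    intro p hp
    simp only [List.mem_map, List.mem_range] at hp
    obtain ⟨i', _, rfl⟩ := hp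
    exact descWord_fix_lt _ _ _ (by omega)
  · intro j hj2 hjr
    exact vm_aux q hq m (r - 1) hm j hj2 (by omega)
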